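/- Let H ≤ G × G be a subspace with Goursat data E_X = {x | ∃ z, (x,z) ∈ H}, E_Z = {z | ∃ x, (x,z) ∈ H}, N_X = {x | (x,0) ∈ H}, N_Z = {z | (0,z) ∈ H}. Then the Goursat data of the complement H^ω is given by: {x | ∃ z, (x,z) ∈ H^ω} = N_Z^θ, {z | ∃ x, (x,z) ∈ H^ω} = N_X^θ, {x | (x,0) ∈ H^ω} = E_Z^θ, and {z | (0,z) ∈ H^ω} = E_X^θ. -/

import Mathlib

open Finset

/-- Orthogonal complement of a submodule with respect to a bilinear form:
`ortho ξ H = {v | ξ(v,h) = 0 for all h ∈ H}`. -/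
def ortho {K V : Type*} [CommSemiring K] [AddCommMonoid V] [Module K V]
    (ξ : V →ₗ[K] V →ₗ[K] K) (H : Submodule K V) : Submodule K V :=
  ⨅ h ∈ H, LinearMap.ker (ξ.flip h)

/-- The dot product `θ(a,b) = ∑ j, a j * b j` as a bilinear form on `Fin n → ZMod p`. -/
def dotB (p n : ℕ) : (Fin n → ZMod p) →ₗ[ZMod p] (Fin n → ZMod p) →ₗ[ZMod p] ZMod p :=
  LinearMap.mk₂ (ZMod p) (fun a b => ∑ j, a j * b j)
    (fun a a' b => by simp [add_mul, Finset.sum_add_distrib])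
    (fun c a b => by simp [Finset.mul_sum, mul_assoc])
    (fun a b b' => by simp [mul_add, Finset.sum_add_distrib])
    (fun c a b => by simp [Finset.mul_sum, mul_left_comm])

/-- The symmetric form on `V × V` induced by a bilinear form `B` on `V`:
`(v,w) ↦ B v.1 w.1 + B v.2 w.2`. -/
def sumB {K V : Type*} [CommRing K] [AddCommGroup V] [Module K V]
    (B : V →ₗ[K] V →ₗ[K] K) : (V × V) →ₗ[K] (V × V) →ₗ[K] K :=
  LinearMap.mk₂ K (fun v w => B v.1 w.1 + B v.2 w.2)
    (fun v v' w => by simp; ring)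
    (fun c v w => by simp; ring)
    (fun v w w' => by simp; ring)
    (fun c v w => by simp; ring)

/-- The symplectic form on `V × V` induced by a symmetric bilinear form `B` on `V`:
`(v,w) ↦ B v.2 w.1 - B v.1 w.2`. -/
def sympB {K V : Type*} [CommRing K] [AddCommGroup V] [Module K V]
    (B : V →ₗ[K] V →ₗ[K] K) : (V × V) →ₗ[K] (V × V) →ₗ[K] K :=
  LinearMap.mk₂ K (fun v w => B v.2 w.1 - B v.1 w.2)
    (fun v v' w => by simp; ring)
    (fun c v w => by simp; ring)
    (fun v w w' => by simp; ring)
    (fun c v w => by simp; ring)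

section Aux

open LinearMap

variable {K V : Type*}

lemma mem_ortho_iff [CommSemiring K] [AddCommMonoid V] [Module K V]
    (ξ : V →ₗ[K] V →ₗ[K] K) (H : Submodule K V) (v : V) :
    v ∈ ortho ξ H ↔ ∀ h ∈ H, ξ v h = 0 := by
  simp [ortho]

lemma ortho_eq_orthogonal [CommSemiring K] [AddCommMonoid V] [Module K V]
    (ξ : V →ₗ[K] V →ₗ[K] K) (hr : ξ.IsRefl) (H : Submodule K V) :
    ortho ξ H = BilinForm.orthogonal ξ H := by
  ext v
  rw [mem_ortho_iff, BilinForm.mem_orthogonal_iff]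
  exact ⟨fun h x hx => hr _ _ (h x hx), fun h x hx => hr _ _ (h x hx)⟩

lemma dotB_symm (p n : ℕ) : (dotB p n).IsSymm := by
  refine ⟨fun a b => ?_⟩; simp [dotB, mul_comm]

lemma dotB_nondeg (p n : ℕ) : LinearMap.BilinForm.Nondegenerate (dotB p n) := by
  refine (dotB_symm p n).isRefl.nondegenerate_iff_separatingLeft.2 ?_
  intro a ha
  funext j
  have := ha (Pi.single j 1)
  simpa [dotB, Pi.single_apply, Finset.mul_sum] using this

lemma sympB_refl [CommRing K] [AddCommGroup V] [Module K V]
    {B : V →ₗ[K] V →ₗ[K] K} (hs : B.IsSymm) : (sympB B).IsRefl := by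
  intro v w h
  simp only [sympB, mk₂_apply] at h ⊢
  have h1 := hs.eq v.1 w.2
  have h2 := hs.eq v.2 w.1
  simp only [RingHom.id_apply] at h1 h2
  rw [← h1, ← h2]
  linear_combination -h

lemma sympB_nondeg [CommRing K] [AddCommGroup V] [Module K V]
    {B : V →ₗ[K] V →ₗ[K] K} (hs : B.IsSymm) (hn : LinearMap.BilinForm.Nondegenerate B) :
    LinearMap.BilinForm.Nondegenerate (sympB B) := by
  refine (sympB_refl hs).nondegenerate_iff_separatingLeft.2 ?_
  intro v hv
  have h1 : v.1 = 0 := by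
    apply hn.1
    intro d
    have := hv (0, d)
    simpa [sympB] using this
  have h2 : v.2 = 0 := by
    apply hn.1
    intro d
    have := hv (d, 0)
    simpa [sympB] using this
  exact Prod.ext h1 h2

lemma ortho_ortho [Field K] [AddCommGroup V] [Module K V] [FiniteDimensional K V]
    (ξ : V →ₗ[K] V →ₗ[K] K) (hr : ξ.IsRefl) (hn : LinearMap.BilinForm.Nondegenerate ξ)
    (H : Submodule K V) : ortho ξ (ortho ξ H) = H := by
  rw [ortho_eq_orthogonal ξ hr, ortho_eq_orthogonal ξ hr]
  exact BilinForm.orthogonal_orthogonal hn hr H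

lemma eq3 (p n : ℕ)
    (H : Submodule (ZMod p) ((Fin n → ZMod p) × (Fin n → ZMod p))) :
    (ortho (sympB (dotB p n)) H).comap (LinearMap.inl (ZMod p) _ _)
      = ortho (dotB p n) (H.map (LinearMap.snd (ZMod p) _ _)) := by
  ext x
  simp only [Submodule.mem_comap, mem_ortho_iff, Submodule.mem_map, LinearMap.inl_apply,
    LinearMap.snd_apply, sympB, LinearMap.mk₂_apply]
  constructor
  · rintro h d ⟨⟨c, d'⟩, hc, rfl⟩
    have := h (c, d') hc
    simpa using this
  · rintro h ⟨c, d⟩ hc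
    have := h d ⟨(c, d), hc, rfl⟩
    simpa using this

lemma eq4 (p n : ℕ)
    (H : Submodule (ZMod p) ((Fin n → ZMod p) × (Fin n → ZMod p))) :
    (ortho (sympB (dotB p n)) H).comap (LinearMap.inr (ZMod p) _ _)
      = ortho (dotB p n) (H.map (LinearMap.fst (ZMod p) _ _)) := by
  ext z
  simp only [Submodule.mem_comap, mem_ortho_iff, Submodule.mem_map, LinearMap.inr_apply,
    LinearMap.fst_apply, sympB, LinearMap.mk₂_apply]
  constructor
  · rintro h c ⟨⟨c', d⟩, hc, rfl⟩
    have := h (c', d) hc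
    simpa using this
  · rintro h ⟨c, d⟩ hc
    have := h c ⟨(c, d), hc, rfl⟩
    simpa using this

end Aux

/-- for `H ≤ G × G` with Goursat data
`E_X = {x | ∃ z, (x,z) ∈ H}`, `E_Z = {z | ∃ x, (x,z) ∈ H}`,
`N_X = {x | (x,0) ∈ H}`, `N_Z = {z | (0,z) ∈ H}`, the Goursat data of `H^ω` is
`{x | ∃ z, (x,z) ∈ H^ω} = N_Z^θ`, `{z | ∃ x, (x,z) ∈ H^ω} = N_X^θ`,
`{x | (x,0) ∈ H^ω} = E_Z^θ`, and `{z | (0,z) ∈ H^ω} = E_X^θ`. -/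
theorem stmt14 (p n : ℕ) [Fact p.Prime]
    (H : Submodule (ZMod p) ((Fin n → ZMod p) × (Fin n → ZMod p))) :
    (ortho (sympB (dotB p n)) H).map (LinearMap.fst (ZMod p) _ _)
      = ortho (dotB p n) (H.comap (LinearMap.inr (ZMod p) _ _)) ∧
    (ortho (sympB (dotB p n)) H).map (LinearMap.snd (ZMod p) _ _)
      = ortho (dotB p n) (H.comap (LinearMap.inl (ZMod p) _ _)) ∧
    (ortho (sympB (dotB p n)) H).comap (LinearMap.inl (ZMod p) _ _)
      = ortho (dotB p n) (H.map (LinearMap.snd (ZMod p) _ _)) ∧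
    (ortho (sympB (dotB p n)) H).comap (LinearMap.inr (ZMod p) _ _)
      = ortho (dotB p n) (H.map (LinearMap.fst (ZMod p) _ _)) := by
  have hr := sympB_refl (dotB_symm p n)
  have hn := sympB_nondeg (dotB_symm p n) (dotB_nondeg p n)
  have hrd : (dotB p n).IsRefl := (dotB_symm p n).isRefl
  have hnd := dotB_nondeg p n
  refine ⟨?_, ?_, eq3 p n H, eq4 p n H⟩
  · have := eq4 p n (ortho (sympB (dotB p n)) H)
    rw [ortho_ortho _ hr hn] at this
    rw [this, ortho_ortho _ hrd hnd]
  · have := eq3 p n (ortho (sympB (dotB p n)) H)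
    rw [ortho_ortho _ hr hn] at this
    rw [this, ortho_ortho _ hrd hnd]
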